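/- For all q, q_d ∈ S² with ⟨q_d, q⟩ > −1 (equivalently Ψ(q, q_d) < 2), the inequalities ‖e_q(q, q_d)‖₂² ≤ Ψ(q, q_d) ≤ 2‖e_q(q, q_d)‖₂² hold. -/

import Mathlib

open scoped RealInnerProductSpace

/-- Cross product on ℝ³ (as `EuclideanSpace ℝ (Fin 3)`). -/
noncomputable def cross (a b : EuclideanSpace ℝ (Fin 3)) : EuclideanSpace ℝ (Fin 3) :=
  WithLp.toLp 2 ![a 1 * b 2 - a 2 * b 1, a 2 * b 0 - a 0 * b 2, a 0 * b 1 - a 1 * b 0]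

/-- Reduced-attitude error function Ψ(q, q_d) = 2 − √2·√(1 + ⟨q_d, q⟩). -/
noncomputable def Psi (q qd : EuclideanSpace ℝ (Fin 3)) : ℝ :=
  2 - Real.sqrt 2 * Real.sqrt (1 + ⟪qd, q⟫)

/-- Reduced-attitude error vector e_q(q, q_d). -/
noncomputable def eVec (q qd : EuclideanSpace ℝ (Fin 3)) : EuclideanSpace ℝ (Fin 3) :=
  (1 / (Real.sqrt 2 * Real.sqrt (1 + ⟪qd, q⟫))) • cross q (cross q qd)

theorem eq_le_psi_le_two_eq (q qd : EuclideanSpace ℝ (Fin 3))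
    (hq : ‖q‖ = 1) (hqd : ‖qd‖ = 1) (h : ⟪qd, q⟫ > -1) :
    ‖eVec q qd‖ ^ 2 ≤ Psi q qd ∧ Psi q qd ≤ 2 * ‖eVec q qd‖ ^ 2 := by
  set c : ℝ := ⟪qd, q⟫ with hc
  have hcval : c = qd 0 * q 0 + qd 1 * q 1 + qd 2 * q 2 := by
    simp [hc, PiLp.inner_apply, RCLike.inner_apply, conj_trivial, Fin.sum_univ_three]
    ring
  have hq2 : q 0 ^ 2 + q 1 ^ 2 + q 2 ^ 2 = 1 := by
    have := hq
    rw [EuclideanSpace.norm_eq] at this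
    have h2 : (∑ i, ‖q i‖ ^ 2) = 1 := by
      have hnn : (0:ℝ) ≤ ∑ i, ‖q i‖ ^ 2 :=
        Finset.sum_nonneg fun i _ => by positivity
      nlinarith [Real.sq_sqrt hnn, this]
    simpa [Fin.sum_univ_three, Real.norm_eq_abs, sq_abs] using h2
  have hqd2 : qd 0 ^ 2 + qd 1 ^ 2 + qd 2 ^ 2 = 1 := by
    have := hqd
    rw [EuclideanSpace.norm_eq] at this
    have h2 : (∑ i, ‖qd i‖ ^ 2) = 1 := by
      have hnn : (0:ℝ) ≤ ∑ i, ‖qd i‖ ^ 2 :=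
        Finset.sum_nonneg fun i _ => by positivity
      nlinarith [Real.sq_sqrt hnn, this]
    simpa [Fin.sum_univ_three, Real.norm_eq_abs, sq_abs] using h2
  -- norm of the double cross product
  have hw : ‖cross q (cross q qd)‖ ^ 2 = 1 - c ^ 2 := by
    rw [EuclideanSpace.norm_eq]
    have hnn : (0:ℝ) ≤ ∑ i, ‖cross q (cross q qd) i‖ ^ 2 :=
      Finset.sum_nonneg fun i _ => by positivity
    rw [Real.sq_sqrt hnn]
    simp only [Fin.sum_univ_three, Real.norm_eq_abs, sq_abs]
    simp only [sq_abs, cross, WithLp.ofLp_toLp, Matrix.cons_val_zero, Matrix.cons_val_one, Matrix.head_cons,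
      Matrix.cons_val_two, Matrix.tail_cons]
    rw [hcval]
    linear_combination (((q 0 ^ 2 + q 1 ^ 2 + q 2 ^ 2) + 1) * (qd 0 ^ 2 + qd 1 ^ 2 + qd 2 ^ 2)
      - (qd 0 * q 0 + qd 1 * q 1 + qd 2 * q 2) ^ 2) * hq2 + hqd2
  have hcpos : (0:ℝ) < 1 + c := by linarith
  have hs : Real.sqrt (1 + c) ^ 2 = 1 + c := Real.sq_sqrt hcpos.le
  have hspos : 0 < Real.sqrt (1 + c) := Real.sqrt_pos.mpr hcpos
  set t : ℝ := Real.sqrt 2 * Real.sqrt (1 + c) with ht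
  have ht2 : t ^ 2 = 2 * (1 + c) := by
    rw [ht, mul_pow, Real.sq_sqrt (by norm_num : (0:ℝ) ≤ 2), hs]
  have htpos : 0 < t := by positivity
  have hcle : c ≤ 1 := by
    have := real_inner_le_norm qd q
    rw [hq, hqd] at this; simpa [hc] using this
  have hts : t ≤ 2 := by nlinarith
  have he : ‖eVec q qd‖ ^ 2 = (1 - c) / 2 := by
    rw [eVec, norm_smul]
    rw [mul_pow, ← hc, ← ht, hw]
    rw [Real.norm_eq_abs, abs_of_pos (by positivity : (0:ℝ) < 1 / t)]
    rw [div_pow, one_pow, ht2]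
    field_simp
    ring
  have hpsi : Psi q qd = 2 - t := by rw [Psi, ← hc, ht]
  rw [he, hpsi]
  constructor <;> nlinarith [sq_nonneg (t - 2), htpos, ht2]
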